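/- The class of linearly ordered sets equipped with one order reversing (antitone) unary operation has the amalgamation property: whenever A, B, C are linearly ordered sets with antitone unary operations g_A, g_B, g_C and i_A : C → A, i_B : C → B are order embeddings satisfying i_A ∘ g_C = g_A ∘ i_A and i_B ∘ g_C = g_B ∘ i_B, there exist a linearly ordered set D with an antitone unary operation g_D and order embeddings j_A : A → D, j_B : B → D commuting with the operations, such that j_A ∘ i_A = j_B ∘ i_B. -/

import Mathlib

structure LinOrderAnti where
  carrier : Type
  [linOrd : LinearOrder carrier]
  g : carrier → carrier
  anti : Antitone g

attribute [instance] LinOrderAnti.linOrd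

namespace LinAmalg

def tauX (X : LinOrderAnti) (x : X.carrier) : ℕ :=
  if x < X.g x then 0 else if X.g x < x then 2 else 1

variable {X : LinOrderAnti}

lemma tauX_le_two (x : X.carrier) : tauX X x ≤ 2 := by
  unfold tauX; split_ifs <;> omega

lemma tauX_eq_zero_iff {x : X.carrier} : tauX X x = 0 ↔ x < X.g x := by
  unfold tauX; split_ifs with h1 h2
  · simp [h1]
  · simp [h1]
  · simp [h1]

lemma tauX_eq_two_iff {x : X.carrier} : tauX X x = 2 ↔ X.g x < x := by
  unfold tauX; split_ifs with h1 h2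
  · simp [h1.asymm]
  · simp [h2]
  · simp [h2]

lemma tauX_eq_one_iff {x : X.carrier} : tauX X x = 1 ↔ X.g x = x := by
  unfold tauX; split_ifs with h1 h2
  · simp [h1.ne']
  · simp [h2.ne]
  · simp [le_antisymm (not_lt.mp h1) (not_lt.mp h2)]

lemma tauX_mono {x y : X.carrier} (h : x ≤ y) : tauX X x ≤ tauX X y := by
  have h2 : X.g y ≤ X.g x := X.anti h
  by_cases h1 : x < X.g x
  · rw [tauX_eq_zero_iff.mpr h1]; omega
  · by_cases h3 : X.g x < x
    · have : X.g y < y := lt_of_le_of_lt h2 (lt_of_lt_of_le h3 h)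
      rw [tauX_eq_two_iff.mpr h3, tauX_eq_two_iff.mpr this]
    · have hfix : X.g x = x := le_antisymm (not_lt.mp h1) (not_lt.mp h3)
      have hy : ¬ y < X.g y := by
        intro hy
        exact absurd (lt_of_le_of_lt h (hy.trans_le (h2.trans hfix.le))) (lt_irrefl x)
      rw [tauX_eq_one_iff.mpr hfix]
      rcases Nat.lt_or_ge (tauX X y) 1 with hh | hh
      · exact absurd (tauX_eq_zero_iff.mp (by omega)) hy
      · omega

lemma tauX_g_ge {x : X.carrier} (h : x ≤ X.g x) : 1 ≤ tauX X (X.g x) := by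
  have h2 : ¬ X.g x < X.g (X.g x) := not_lt.mpr (X.anti h)
  rcases Nat.lt_or_ge (tauX X (X.g x)) 1 with hh | hh
  · exact absurd (tauX_eq_zero_iff.mp (by omega)) h2
  · exact hh

lemma tauX_g_le {x : X.carrier} (h : X.g x ≤ x) : tauX X (X.g x) ≤ 1 := by
  have h2 : ¬ X.g (X.g x) < X.g x := not_lt.mpr (X.anti h)
  rcases Nat.lt_or_ge (tauX X (X.g x)) 2 with hh | hh
  · omega
  · have := tauX_le_two (X := X) (X.g x)
    exact absurd (tauX_eq_two_iff.mp (by omega)) h2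

lemma tauX_g0 {x : X.carrier} (h : tauX X (X.g x) = 0) : tauX X x = 2 := by
  have h1 : X.g x < X.g (X.g x) := tauX_eq_zero_iff.mp h
  apply tauX_eq_two_iff.mpr
  by_contra h2
  exact absurd h1 (not_lt.mpr (X.anti (not_lt.mp h2)))

lemma tauX_g2 {x : X.carrier} (h : tauX X (X.g x) = 2) : tauX X x = 0 := by
  have h1 : X.g (X.g x) < X.g x := tauX_eq_two_iff.mp h
  apply tauX_eq_zero_iff.mpr
  by_contra h2
  exact absurd h1 (not_lt.mpr (X.anti (not_lt.mp h2)))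

lemma fixX_unique {x y : X.carrier} (hx : X.g x = x) (hy : X.g y = y) : x = y := by
  rcases le_total x y with h | h
  · have := X.anti h; rw [hx, hy] at this; exact le_antisymm h this
  · have := X.anti h; rw [hx, hy] at this; exact (le_antisymm h this).symm


structure Setup where
  A : LinOrderAnti
  B : LinOrderAnti
  C : LinOrderAnti
  iA : C.carrier ↪o A.carrier
  iB : C.carrier ↪o B.carrier
  hA : ∀ c, iA (C.g c) = A.g (iA c)
  hB : ∀ c, iB (C.g c) = B.g (iB c)

namespace Setup

variable (S : Setup)

abbrev U := S.A.carrier ⊕ S.B.carrier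

def G : S.U → S.U
  | .inl a => .inl (S.A.g a)
  | .inr b => .inr (S.B.g b)

def sle : S.U → S.U → Prop
  | .inl a, .inl a' => a ≤ a'
  | .inr b, .inr b' => b ≤ b'
  | _, _ => False

def slt : S.U → S.U → Prop
  | .inl a, .inl a' => a < a'
  | .inr b, .inr b' => b < b'
  | _, _ => False

def cross : S.U → S.U → Prop
  | .inl _, .inr _ => True
  | .inr _, .inl _ => True
  | _, _ => False

def lec : S.U → S.C.carrier → Prop
  | .inl a, c => a ≤ S.iA c
  | .inr b, c => b ≤ S.iB c

def ltc : S.U → S.C.carrier → Prop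
  | .inl a, c => a < S.iA c
  | .inr b, c => b < S.iB c

def cle : S.C.carrier → S.U → Prop
  | c, .inl a => S.iA c ≤ a
  | c, .inr b => S.iB c ≤ b

def clt : S.C.carrier → S.U → Prop
  | c, .inl a => S.iA c < a
  | c, .inr b => S.iB c < b

def ceq : S.C.carrier → S.U → Prop
  | c, .inl a => a = S.iA c
  | c, .inr b => b = S.iB c

def tau : S.U → ℕ
  | .inl a => tauX S.A a
  | .inr b => tauX S.B b

def tieSide : S.U → ℕ
  | .inl _ => 0
  | .inr _ => 2

variable {S}

/-! ### basic side lemmas -/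

lemma sle_refl (u : S.U) : sle S u u := by cases u <;> simp [sle]

lemma sle_trans {u v w : S.U} (h1 : sle S u v) (h2 : sle S v w) : sle S u w := by
  cases u <;> cases v <;> cases w <;> simp [sle] at * <;> exact h1.trans h2

lemma slt_irrefl (u : S.U) : ¬ slt S u u := by cases u <;> simp [slt]

lemma sle_of_slt {u v : S.U} (h : slt S u v) : sle S u v := by
  cases u <;> cases v <;> simp [sle, slt] at * <;> exact h.le

lemma slt_of_sle_ne {u v : S.U} (h : sle S u v) (h2 : u ≠ v) : slt S u v := by
  cases u <;> cases v <;> simp [sle, slt] at * <;> exact lt_of_le_of_ne h (by rintro rfl; exact h2 rfl)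

lemma sle_antisymm {u v : S.U} (h1 : sle S u v) (h2 : sle S v u) : u = v := by
  cases u <;> cases v <;> simp [sle] at * <;> exact le_antisymm h1 h2

lemma slt_of_sle_of_slt {u v w : S.U} (h1 : sle S u v) (h2 : slt S v w) : slt S u w := by
  cases u <;> cases v <;> cases w <;> simp [sle, slt] at * <;> exact h1.trans_lt h2

lemma slt_of_slt_of_sle {u v w : S.U} (h1 : slt S u v) (h2 : sle S v w) : slt S u w := by
  cases u <;> cases v <;> cases w <;> simp [sle, slt] at * <;> exact h1.trans_le h2

lemma slt_asymm {u v : S.U} (h1 : slt S u v) (h2 : slt S v u) : False := by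
  cases u <;> cases v <;> simp [slt] at * <;> exact absurd h2 (not_lt.mpr h1.le)

lemma side_total (u v : S.U) : cross S u v ∨ sle S u v ∨ sle S v u := by
  cases u <;> cases v <;> simp [cross, sle] <;> exact le_total _ _

lemma cross_symm {u v : S.U} (h : cross S u v) : cross S v u := by
  cases u <;> cases v <;> simp [cross] at *

lemma cross_irrefl (u : S.U) : ¬ cross S u u := by cases u <;> simp [cross]

lemma slt_not_cross {u v : S.U} (h1 : slt S u v) (h2 : cross S u v) : False := by
  cases u <;> cases v <;> simp [slt, cross] at *

lemma cross_of_sle_left {u' u v : S.U} (h : sle S u' u) (h2 : cross S u v) : cross S u' v := by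
  cases u' <;> cases u <;> cases v <;> simp [sle, cross] at *

lemma cross_of_sle_left' {u u' v : S.U} (h : sle S u u') (h2 : cross S u v) : cross S u' v := by
  cases u' <;> cases u <;> cases v <;> simp [sle, cross] at *

lemma cross_of_sle_right {u v v' : S.U} (h : sle S v v') (h2 : cross S u v) : cross S u v' := by
  cases u <;> cases v <;> cases v' <;> simp [sle, cross] at *

lemma cross_of_sle_right' {u v v' : S.U} (h : sle S v' v) (h2 : cross S u v) : cross S u v' := by
  cases u <;> cases v <;> cases v' <;> simp [sle, cross] at *

lemma same_side_of_cross_cross {z x y : S.U} (h1 : cross S z x) (h2 : cross S z y) :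
    sle S x y ∨ sle S y x := by
  cases z <;> cases x <;> cases y <;> simp [cross, sle] at * <;> exact le_total _ _

lemma anti_sle {u v : S.U} (h : sle S u v) : sle S (G S v) (G S u) := by
  cases u <;> cases v <;> simp [sle, G] at *
  · exact S.A.anti h
  · exact S.B.anti h

lemma slt_G_rev {u v : S.U} (h : slt S (G S u) (G S v)) : slt S v u := by
  cases u <;> cases v <;> simp [slt, G] at *
  · by_contra h2
    exact absurd h (not_lt.mpr (S.A.anti (not_lt.mp h2)))
  · by_contra h2
    exact absurd h (not_lt.mpr (S.B.anti (not_lt.mp h2)))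

lemma cross_G_rev {u v : S.U} (h : cross S (G S u) (G S v)) : cross S v u := by
  cases u <;> cases v <;> simp [cross, G] at *

lemma cross_G {u v : S.U} (h : cross S u v) : cross S (G S u) (G S v) := by
  cases u <;> cases v <;> simp [cross, G] at *

lemma tieSide_G (u : S.U) : tieSide S (G S u) = tieSide S u := by
  cases u <;> simp [tieSide, G]

lemma tieSide_vals (u : S.U) : tieSide S u = 0 ∨ tieSide S u = 2 := by
  cases u <;> simp [tieSide]

lemma tieSide_cross {u v : S.U} (h : cross S u v) : tieSide S u ≠ tieSide S v := by
  cases u <;> cases v <;> simp [cross, tieSide] at *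

lemma tieSide_of_sle {u v : S.U} (h : sle S u v) : tieSide S u = tieSide S v := by
  cases u <;> cases v <;> simp [sle, tieSide] at *


/-! ### tau on U -/

lemma tau_le_two (u : S.U) : tau S u ≤ 2 := by cases u <;> simp [tau, tauX_le_two]

lemma tau_zero {u : S.U} : tau S u = 0 ↔ slt S u (G S u) := by
  cases u <;> simp [tau, G, slt] <;> exact tauX_eq_zero_iff

lemma tau_two {u : S.U} : tau S u = 2 ↔ slt S (G S u) u := by
  cases u <;> simp [tau, G, slt] <;> exact tauX_eq_two_iff

lemma tau_one {u : S.U} : tau S u = 1 ↔ G S u = u := by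
  cases u <;> simp [tau, G, slt] <;> exact tauX_eq_one_iff

lemma tau_mono {u v : S.U} (h : sle S u v) : tau S u ≤ tau S v := by
  cases u <;> cases v <;> simp [sle, tau] at * <;> exact tauX_mono h

lemma tau_g_ge {u : S.U} (h : sle S u (G S u)) : 1 ≤ tau S (G S u) := by
  cases u <;> simp [sle, tau, G] at * <;> exact tauX_g_ge h

lemma tau_g_le {u : S.U} (h : sle S (G S u) u) : tau S (G S u) ≤ 1 := by
  cases u <;> simp [sle, tau, G] at * <;> exact tauX_g_le h

lemma tau_g0 {u : S.U} (h : tau S (G S u) = 0) : tau S u = 2 := by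
  cases u <;> simp [tau, G] at * <;> [exact tauX_g0 h; exact tauX_g0 h]

lemma tau_g2 {u : S.U} (h : tau S (G S u) = 2) : tau S u = 0 := by
  cases u <;> simp [tau, G] at * <;> [exact tauX_g2 h; exact tauX_g2 h]

lemma fix_unique_side {u v v' : S.U} (hv : G S v = v) (hv' : G S v' = v')
    (h1 : cross S u v) (h2 : cross S u v') : v = v' := by
  cases u <;> cases v <;> cases v' <;> simp [cross, G] at * <;>
    exact fixX_unique hv hv'

lemma t_step {u v : S.U} (h : tau S u < tau S v) :
    tau S (G S v) < tau S (G S u) ∨ (G S (G S u) = G S u ∧ G S (G S v) = G S v) := by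
  have hv2 := tau_le_two v
  have hGu : 1 ≤ tau S (G S u) := by
    rcases Nat.lt_or_ge (tau S u) 1 with hh | hh
    · exact tau_g_ge (sle_of_slt (tau_zero.mp (by omega)))
    · have h1 : tau S u = 1 := by omega
      have := tau_one.mp h1
      rw [this, h1]
  have hGv : tau S (G S v) ≤ 1 := by
    rcases Nat.lt_or_ge (tau S v) 2 with hh | hh
    · have h1 : tau S v = 1 := by omega
      have := tau_one.mp h1
      rw [this, h1]
    · exact tau_g_le (sle_of_slt (tau_two.mp (by omega)))
  rcases Nat.lt_or_ge (tau S (G S v)) (tau S (G S u)) with hh | hh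
  · exact Or.inl hh
  · have e1 : tau S (G S u) = 1 := by omega
    have e2 : tau S (G S v) = 1 := by omega
    exact Or.inr ⟨tau_one.mp e1, tau_one.mp e2⟩

/-! ### C-interaction lemmas -/

lemma cg1 {u : S.U} {c} (h : lec S u c) : cle S (S.C.g c) (G S u) := by
  cases u <;> simp [lec, cle, G] at *
  · rw [S.hA]; exact S.A.anti h
  · rw [S.hB]; exact S.B.anti h

lemma cg2 {u : S.U} {c} (h : cle S c u) : lec S (G S u) (S.C.g c) := by
  cases u <;> simp [lec, cle, G] at *
  · rw [S.hA]; exact S.A.anti h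
  · rw [S.hB]; exact S.B.anti h

lemma ce_g {u : S.U} {c} (h : ceq S c u) : ceq S (S.C.g c) (G S u) := by
  cases u <;> simp [ceq, G] at *
  · rw [h, S.hA]
  · rw [h, S.hB]

lemma m1 {u : S.U} {c c'} (h1 : lec S u c) (h2 : cle S c' u) : c' ≤ c := by
  cases u <;> simp [lec, cle] at *
  · exact S.iA.le_iff_le.mp (h2.trans h1)
  · exact S.iB.le_iff_le.mp (h2.trans h1)

lemma m2 {u : S.U} {c c'} (h1 : cle S c u) (h2 : lec S u c') : c ≤ c' := by
  cases u <;> simp [lec, cle] at *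
  · exact S.iA.le_iff_le.mp (h1.trans h2)
  · exact S.iB.le_iff_le.mp (h1.trans h2)

lemma m3 {u : S.U} {c} (h1 : ltc S u c) (h2 : cle S c u) : False := by
  cases u <;> simp [ltc, cle] at * <;> exact absurd h1 (not_lt.mpr h2)

lemma m4 {u : S.U} {c} (h1 : clt S c u) (h2 : lec S u c) : False := by
  cases u <;> simp [clt, lec] at * <;> exact absurd h1 (not_lt.mpr h2)

lemma m5 {u v : S.U} {c c'} (h1 : cle S c u) (h2 : slt S u v) (h3 : lec S v c') : c < c' := by
  cases u <;> cases v <;> simp [cle, slt, lec] at *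
  · exact S.iA.lt_iff_lt.mp ((h1.trans_lt h2).trans_le h3)
  · exact S.iB.lt_iff_lt.mp ((h1.trans_lt h2).trans_le h3)

lemma m6 {u v : S.U} {c} (h1 : sle S u v) (h2 : lec S v c) : lec S u c := by
  cases u <;> cases v <;> simp [sle, lec] at * <;> exact h1.trans h2

lemma m6' {u v : S.U} {c} (h1 : sle S u v) (h2 : ltc S v c) : ltc S u c := by
  cases u <;> cases v <;> simp [sle, ltc] at * <;> exact h1.trans_lt h2

lemma m7 {u v : S.U} {c} (h1 : cle S c u) (h2 : sle S u v) : cle S c v := by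
  cases u <;> cases v <;> simp [sle, cle] at * <;> exact h1.trans h2

lemma m9b {u v : S.U} {c} (h1 : clt S c u) (h2 : sle S u v) : clt S c v := by
  cases u <;> cases v <;> simp [sle, clt] at * <;> exact h1.trans_le h2

lemma m11 {u : S.U} {c} (h : ltc S u c) : lec S u c := by
  cases u <;> simp [ltc, lec] at * <;> exact h.le

lemma m12 {u : S.U} {c} (h : clt S c u) : cle S c u := by
  cases u <;> simp [clt, cle] at * <;> exact h.le

lemma m13 {u : S.U} {c} (h : ceq S c u) : lec S u c ∧ cle S c u := by
  cases u <;> simp [ceq, lec, cle] at * <;> simp [h]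

lemma m15 {u : S.U} {c} (h1 : lec S u c) (h2 : ¬ ltc S u c) : ceq S c u := by
  cases u <;> simp [lec, ltc, ceq] at * <;> exact le_antisymm h1 h2

lemma m16 {u : S.U} {c} (h1 : cle S c u) (h2 : ¬ clt S c u) : ceq S c u := by
  cases u <;> simp [cle, clt, ceq] at * <;> exact le_antisymm h2 h1

lemma m17 {u v : S.U} {c} (h1 : ceq S c u) (h2 : slt S u v) : clt S c v := by
  cases u <;> cases v <;> simp [ceq, slt, clt] at * <;> rw [h1] at h2 <;> exact h2

lemma m18 {u v : S.U} {c} (h1 : ceq S c v) (h2 : slt S u v) : ltc S u c := by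
  cases u <;> cases v <;> simp [ceq, slt, ltc] at * <;> rw [h1] at h2 <;> exact h2

lemma m19 {u : S.U} {c c'} (h1 : ceq S c u) (h2 : ceq S c' u) : c = c' := by
  cases u <;> simp [ceq] at *
  · exact S.iA.injective (h1 ▸ h2)
  · exact S.iB.injective (h1 ▸ h2)

lemma m21 {v : S.U} {c} (h1 : ceq S c v) (h2 : ceq S c (G S v)) : G S v = v := by
  cases v <;> simp only [ceq, G, Sum.inl.injEq, Sum.inr.injEq] at * <;>
    rw [h1] at h2 ⊢ <;> exact h2

lemma ceq_cross_eq {u v v' : S.U} {c} (h1 : ceq S c v) (h2 : ceq S c v')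
    (hx : cross S u v) (hx' : cross S u v') : v = v' := by
  cases u <;> cases v <;> cases v' <;> simp [ceq, cross] at * <;> rw [h1, h2]

/-! ### separation predicates and the consistency invariant -/

variable (S) in
def wsep (u v : S.U) : Prop := ∃ c, lec S u c ∧ cle S c v

variable (S) in
def sep (u v : S.U) : Prop := ∃ c, (lec S u c ∧ cle S c v) ∧ (ltc S u c ∨ clt S c v)

variable (S) in
def P (u v : S.U) : Prop := sep S u v ∨ tau S u < tau S v

variable (S) in
def J (u v : S.U) : Prop :=
  wsep S u v ∨ tau S u < tau S v ∨ (G S u = u ∧ G S v = v)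

lemma wsep_of_sep {u v : S.U} (h : sep S u v) : wsep S u v := by
  obtain ⟨c, hc, _⟩ := h; exact ⟨c, hc⟩

lemma lemY {u v : S.U} (h1 : wsep S u v) (h2 : sep S v u) : False := by
  obtain ⟨c1, hc1, hc1'⟩ := h1
  obtain ⟨c2, ⟨hc2, hc2'⟩, hstrict⟩ := h2
  have e1 : c1 ≤ c2 := m2 hc1' hc2
  have e2 : c2 ≤ c1 := m1 hc1 hc2'
  have e : c1 = c2 := le_antisymm e1 e2
  rcases hstrict with hs | hs
  · exact m3 hs (e ▸ hc1')
  · exact m4 hs (e ▸ hc1)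

lemma lemX {u v : S.U} (h1 : wsep S u v) (h2 : tau S v < tau S u) : False := by
  obtain ⟨c, hc, hc'⟩ := h1
  have g1 : cle S (S.C.g c) (G S u) := cg1 hc
  have g2 : lec S (G S v) (S.C.g c) := cg2 hc'
  have htu := tau_le_two (S := S) u
  rcases Nat.lt_or_ge (tau S v) 1 with hv0 | hv1
  · -- tau v = 0 : v < G v , so c < g c
    have hvlt : slt S v (G S v) := tau_zero.mp (by omega)
    have hlt : c < S.C.g c := m5 hc' hvlt g2
    rcases Nat.lt_or_ge (tau S u) 2 with hu1 | hu2
    · -- tau u = 1 : G u = u, so g c ≤ c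
      have hfix : G S u = u := tau_one.mp (by omega)
      have : S.C.g c ≤ c := m1 hc (hfix ▸ g1)
      exact absurd hlt (not_lt.mpr this)
    · -- tau u = 2 : G u < u, so g c < c
      have hult : slt S (G S u) u := tau_two.mp (by omega)
      have : S.C.g c < c := m5 g1 hult hc
      exact absurd hlt (not_lt.mpr this.le)
  · -- tau v = 1 (tau u = 2) : G v = v gives c ≤ g c ; G u < u gives g c < c
    have hv1' : tau S v = 1 := by omega
    have hfix : G S v = v := tau_one.mp hv1'
    have hle : c ≤ S.C.g c := m2 hc' (hfix ▸ g2)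
    have hult : slt S (G S u) u := tau_two.mp (by omega)
    have : S.C.g c < c := m5 g1 hult hc
    exact absurd hle (not_le.mpr this)

lemma wsep_step {u v : S.U} (h : wsep S u v) : wsep S (G S v) (G S u) := by
  obtain ⟨c, hc, hc'⟩ := h
  exact ⟨S.C.g c, cg2 hc', cg1 hc⟩

lemma lemJ1 {u v : S.U} (h : P S u v) : J S u v := by
  rcases h with h | h
  · exact Or.inl (wsep_of_sep h)
  · exact Or.inr (Or.inl h)

lemma lemJ2 {u v : S.U} (h : J S u v) : J S (G S v) (G S u) := by
  rcases h with h | h | ⟨hu, hv⟩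
  · exact Or.inl (wsep_step h)
  · rcases t_step h with h' | ⟨h1, h2⟩
    · exact Or.inr (Or.inl h')
    · exact Or.inr (Or.inr ⟨h2, h1⟩)
  · exact Or.inr (Or.inr ⟨by simp [hv], by simp [hu]⟩)

lemma lemJ3 {u v : S.U} (h1 : J S u v) (h2 : P S v u) : False := by
  rcases h1 with h1 | h1 | ⟨hfu, hfv⟩
  · rcases h2 with h2 | h2
    · exact lemY h1 h2
    · exact lemX h1 h2
  · rcases h2 with h2 | h2
    · exact lemX (wsep_of_sep h2) h1
    · omega
  · rcases h2 with h2 | h2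
    · -- sep v u together with fixedness gives wsep u v
      have hsep := h2
      obtain ⟨c, ⟨hc, hc'⟩, _⟩ := h2
      have g1 : cle S (S.C.g c) (G S v) := cg1 hc
      have g2 : lec S (G S u) (S.C.g c) := cg2 hc'
      rw [hfv] at g1; rw [hfu] at g2
      exact lemY ⟨S.C.g c, g2, g1⟩ hsep
    · rw [tau_one.mpr hfv, tau_one.mpr hfu] at h2; omega

/-! ### monotonicity of P -/

lemma P_mono_l {u' u v : S.U} (h : sle S u' u) (hp : P S u v) : P S u' v := by
  rcases hp with ⟨c, ⟨hc, hc'⟩, hs⟩ | hp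
  · refine Or.inl ⟨c, ⟨m6 h hc, hc'⟩, ?_⟩
    rcases hs with hs | hs
    · exact Or.inl (m6' h hs)
    · exact Or.inr hs
  · exact Or.inr (lt_of_le_of_lt (tau_mono h) hp)

lemma P_mono_r {u v v' : S.U} (h : sle S v v') (hp : P S u v) : P S u v' := by
  rcases hp with ⟨c, ⟨hc, hc'⟩, hs⟩ | hp
  · refine Or.inl ⟨c, ⟨hc, m7 hc' h⟩, ?_⟩
    rcases hs with hs | hs
    · exact Or.inl hs
    · exact Or.inr (m9b hs h)
  · exact Or.inr (lt_of_lt_of_le hp (tau_mono h))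

/-! ### iterates -/

lemma pg {u v : S.U} (h : sle S u v) : ∀ n,
    (Even n → sle S ((G S)^[n] u) ((G S)^[n] v)) ∧
    (Odd n → sle S ((G S)^[n] v) ((G S)^[n] u)) := by
  intro n
  induction n with
  | zero => exact ⟨fun _ => h, fun ho => absurd ho (by simp)⟩
  | succ k ih =>
    constructor
    · intro he
      have hk : Odd k := by
        rw [Nat.even_add_one] at he; exact Nat.not_even_iff_odd.mp he
      have := anti_sle (ih.2 hk)
      simpa only [Function.iterate_succ_apply'] using this
    · intro ho
      have hk : Even k := by
        rw [Nat.odd_iff] at ho; rw [Nat.even_iff]; omega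
      have := anti_sle (ih.1 hk)
      simpa only [Function.iterate_succ_apply'] using this

variable (S) in
def Pw (n : ℕ) (x y : S.U) : Prop :=
  (Even n ∧ P S ((G S)^[n] x) ((G S)^[n] y)) ∨ (Odd n ∧ P S ((G S)^[n] y) ((G S)^[n] x))

variable (S) in
def Fo (x y : S.U) : Prop := ∃ n, Pw S n x y

lemma Jiter {u v : S.U} (h : P S u v) : ∀ k,
    (Even k → J S ((G S)^[k] u) ((G S)^[k] v)) ∧
    (Odd k → J S ((G S)^[k] v) ((G S)^[k] u)) := by
  intro k
  induction k with
  | zero => exact ⟨fun _ => lemJ1 h, fun ho => absurd ho (by simp)⟩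
  | succ k ih =>
    constructor
    · intro he
      have hk : Odd k := by
        rw [Nat.even_add_one] at he; exact Nat.not_even_iff_odd.mp he
      have := lemJ2 (ih.2 hk)
      simpa only [Function.iterate_succ_apply'] using this
    · intro ho
      have hk : Even k := by
        rw [Nat.odd_iff] at ho; rw [Nat.even_iff]; omega
      have := lemJ2 (ih.1 hk)
      simpa only [Function.iterate_succ_apply'] using this

lemma P_conflict {u v : S.U} (h : P S u v) (k : ℕ) :
    (Even k → ¬ P S ((G S)^[k] v) ((G S)^[k] u)) ∧
    (Odd k → ¬ P S ((G S)^[k] u) ((G S)^[k] v)) :=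
  ⟨fun he hp => lemJ3 ((Jiter h k).1 he) hp, fun ho hp => lemJ3 ((Jiter h k).2 ho) hp⟩

lemma pw_conflict {n m : ℕ} {x y : S.U} (hnm : n ≤ m)
    (h1 : Pw S n x y) (h2 : Pw S m y x) : False := by
  obtain ⟨k, hk⟩ : ∃ k, m = k + n := ⟨m - n, by omega⟩
  have hGm : ∀ w : S.U, (G S)^[m] w = (G S)^[k] ((G S)^[n] w) := fun w => by
    rw [hk, Function.iterate_add_apply]
  rcases h1 with ⟨hne, hp⟩ | ⟨hno, hp⟩
  · rcases h2 with ⟨hme, hp2⟩ | ⟨hmo, hp2⟩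
    · have hke : Even k := by
        rw [Nat.even_iff] at hne hme ⊢; omega
      rw [hGm, hGm] at hp2
      exact (P_conflict hp k).1 hke hp2
    · have hko : Odd k := by
        rw [Nat.even_iff] at hne; rw [Nat.odd_iff] at hmo ⊢; omega
      rw [hGm, hGm] at hp2
      exact (P_conflict hp k).2 hko hp2
  · rcases h2 with ⟨hme, hp2⟩ | ⟨hmo, hp2⟩
    · have hko : Odd k := by
        rw [Nat.odd_iff] at hno ⊢; rw [Nat.even_iff] at hme; omega
      rw [hGm, hGm] at hp2
      exact (P_conflict hp k).2 hko hp2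
    · have hke : Even k := by
        rw [Nat.odd_iff] at hno hmo; rw [Nat.even_iff]; omega
      rw [hGm, hGm] at hp2
      exact (P_conflict hp k).1 hke hp2

lemma Fo_asymm {x y : S.U} (h1 : Fo S x y) (h2 : Fo S y x) : False := by
  obtain ⟨n, hn⟩ := h1
  obtain ⟨m, hm⟩ := h2
  rcases le_total n m with h | h
  · exact pw_conflict h hn hm
  · exact pw_conflict h hm hn

lemma Fo_G {x y : S.U} (h : Fo S (G S x) (G S y)) : Fo S y x := by
  obtain ⟨n, hn⟩ := h
  refine ⟨n + 1, ?_⟩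
  rcases hn with ⟨he, hp⟩ | ⟨ho, hp⟩
  · refine Or.inr ⟨by simp [Nat.odd_iff, Nat.even_iff] at he ⊢; omega, ?_⟩
    rw [Function.iterate_succ_apply, Function.iterate_succ_apply]
    exact hp
  · refine Or.inl ⟨by simp [Nat.odd_iff, Nat.even_iff] at ho ⊢; omega, ?_⟩
    rw [Function.iterate_succ_apply, Function.iterate_succ_apply]
    exact hp

lemma Fo_shift {n : ℕ} {x y : S.U} (h : Pw S n x y) (hn : 1 ≤ n) : Fo S (G S y) (G S x) := by
  obtain ⟨k, rfl⟩ : ∃ k, n = k + 1 := ⟨n - 1, by omega⟩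
  rcases h with ⟨he, hp⟩ | ⟨ho, hp⟩
  · refine ⟨k, Or.inr ⟨by rw [Nat.even_iff] at he; rw [Nat.odd_iff]; omega, ?_⟩⟩
    rw [Function.iterate_succ_apply, Function.iterate_succ_apply] at hp
    exact hp
  · refine ⟨k, Or.inl ⟨by rw [Nat.odd_iff] at ho; rw [Nat.even_iff]; omega, ?_⟩⟩
    rw [Function.iterate_succ_apply, Function.iterate_succ_apply] at hp
    exact hp

lemma Fo_mono_l {u' u v : S.U} (h : sle S u' u) (hf : Fo S u v) : Fo S u' v := by
  obtain ⟨n, hn⟩ := hf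
  refine ⟨n, ?_⟩
  rcases hn with ⟨he, hp⟩ | ⟨ho, hp⟩
  · exact Or.inl ⟨he, P_mono_l ((pg h n).1 he) hp⟩
  · exact Or.inr ⟨ho, P_mono_r ((pg h n).2 ho) hp⟩

lemma Fo_mono_r {u v v' : S.U} (h : sle S v v') (hf : Fo S u v) : Fo S u v' := by
  obtain ⟨n, hn⟩ := hf
  refine ⟨n, ?_⟩
  rcases hn with ⟨he, hp⟩ | ⟨ho, hp⟩
  · exact Or.inl ⟨he, P_mono_r ((pg h n).1 he) hp⟩
  · exact Or.inr ⟨ho, P_mono_l ((pg h n).2 ho) hp⟩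

lemma P_Fo {u v : S.U} (h : P S u v) : Fo S u v :=
  ⟨0, Or.inl ⟨Even.zero, by simpa using h⟩⟩

lemma t_eq_of_unforced {u v : S.U} (h1 : ¬ Fo S u v) (h2 : ¬ Fo S v u) :
    tau S u = tau S v := by
  by_contra h
  rcases Nat.lt_or_ge (tau S u) (tau S v) with hh | hh
  · exact h1 (P_Fo (Or.inr hh))
  · exact h2 (P_Fo (Or.inr (by omega)))

/-! ### the order relation on U -/

variable (S) in
def Ceq (u v : S.U) : Prop := ∃ c, ceq S c u ∧ ceq S c v

variable (S) in
def tie (u v : S.U) : Prop :=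
  ¬ Fo S u v ∧ ¬ Fo S v u ∧ ¬ Ceq S u v ∧ tau S u = tieSide S u

variable (S) in
def LT' (u v : S.U) : Prop := slt S u v ∨ (cross S u v ∧ (Fo S u v ∨ tie S u v))

lemma Ceq_symm {u v : S.U} (h : Ceq S u v) : Ceq S v u := by
  obtain ⟨c, h1, h2⟩ := h; exact ⟨c, h2, h1⟩

lemma clause_of {u v : S.U} (h : LT' S u v) (hx : cross S u v) : Fo S u v ∨ tie S u v := by
  rcases h with h | ⟨_, h⟩
  · exact absurd hx (fun hh => slt_not_cross h hh)
  · exact h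

lemma LT'_irrefl (u : S.U) : ¬ LT' S u u := by
  rintro (h | ⟨hx, _⟩)
  · exact slt_irrefl u h
  · exact cross_irrefl u hx

lemma LT'_asymm {u v : S.U} (h1 : LT' S u v) (h2 : LT' S v u) : False := by
  rcases h1 with h1 | ⟨hx1, hc1⟩
  · rcases h2 with h2 | ⟨hx2, _⟩
    · exact slt_asymm h1 h2
    · exact slt_not_cross h1 (cross_symm hx2)
  · rcases h2 with h2 | ⟨hx2, hc2⟩
    · exact slt_not_cross h2 (cross_symm hx1)
    · rcases hc1 with hf1 | ht1
      · rcases hc2 with hf2 | ht2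
        · exact Fo_asymm hf1 hf2
        · exact ht2.2.1 hf1
      · rcases hc2 with hf2 | ht2
        · exact ht1.2.1 hf2
        · -- both ties
          have heq : tau S u = tau S v := t_eq_of_unforced ht1.1 ht1.2.1
          have h1 := ht1.2.2.2
          have h2 := ht2.2.2.2
          have := tieSide_cross hx1
          rcases tieSide_vals (S := S) u with hh | hh <;>
            rcases tieSide_vals (S := S) v with hh' | hh' <;> omega

lemma LT'_antitone {x y : S.U} (h : LT' S (G S x) (G S y)) : LT' S y x := by
  rcases h with h | ⟨hx, hc⟩
  · exact Or.inl (slt_G_rev h)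
  · have hyx : cross S y x := cross_G_rev hx
    have hxy : cross S x y := cross_symm hyx
    rcases hc with hf | ⟨hf1, hf2, hnc, hside⟩
    · exact Or.inr ⟨hyx, Or.inl (Fo_G hf)⟩
    · -- tie (G x) (G y)
      by_cases hFyx : Fo S y x
      · exact Or.inr ⟨hyx, Or.inl hFyx⟩
      -- show ¬ Fo x y
      have hFxy : ¬ Fo S x y := by
        rintro ⟨n, hn⟩
        rcases Nat.lt_or_ge n 1 with hn1 | hn1
        · -- n = 0 : P x y
          have hn0 : n = 0 := by omega
          subst hn0
          have hp : P S x y := by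
            rcases hn with ⟨_, hp⟩ | ⟨ho, _⟩
            · simpa using hp
            · exact absurd ho (by simp)
          rcases hp with hsep | htau
          · -- sep x y : forces structure on (G x, G y)
            obtain ⟨c, ⟨hc1, hc2⟩, _⟩ := hsep
            have g1 : cle S (S.C.g c) (G S x) := cg1 hc1
            have g2 : lec S (G S y) (S.C.g c) := cg2 hc2
            by_cases hlt : ltc S (G S y) (S.C.g c)
            · exact hf2 (P_Fo (Or.inl ⟨S.C.g c, ⟨g2, g1⟩, Or.inl hlt⟩))
            · by_cases hclt : clt S (S.C.g c) (G S x)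
              · exact hf2 (P_Fo (Or.inl ⟨S.C.g c, ⟨g2, g1⟩, Or.inr hclt⟩))
              · exact hnc ⟨S.C.g c, m16 g1 hclt, m15 g2 hlt⟩
          · -- tau x < tau y
            rcases t_step htau with hlt | ⟨hfx, hfy⟩
            · exact hf2 (P_Fo (Or.inr hlt))
            · have : tau S (G S x) = 1 := tau_one.mpr hfx
              have h4 := hside
              rcases tieSide_vals (S := S) (G S x) with hh | hh <;> omega
        · -- n ≥ 1
          exact hf2 (Fo_shift hn hn1)
      -- now (x,y) unforced; build tie y x
      refine Or.inr ⟨hyx, Or.inr ⟨hFyx, ?hFyx2, ?nc, ?side⟩⟩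
      case hFyx2 => exact hFxy
      case nc =>
        rintro ⟨c, hcy, hcx⟩
        exact hnc ⟨S.C.g c, ce_g hcx, ce_g hcy⟩
      case side =>
        have hteq : tau S x = tau S y := t_eq_of_unforced hFxy hFyx
        have hts : tieSide S (G S x) = tieSide S x := tieSide_G x
        have htsx := tieSide_cross hxy
        rcases tieSide_vals (S := S) x with hh | hh
        · -- x on the A side: tau (G x) = 0 so tau x = 2
          have h0 : tau S (G S x) = 0 := by omega
          have h2 : tau S x = 2 := tau_g0 h0
          rcases tieSide_vals (S := S) y with hh' | hh' <;> omega
        · have h0 : tau S (G S x) = 2 := by omega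
          have h2 : tau S x = 0 := tau_g2 h0
          rcases tieSide_vals (S := S) y with hh' | hh' <;> omega

/-! ### monotonicity of LT' across sides -/

lemma Mdown {u' u v : S.U} (h : sle S u' u) (hx : cross S u v)
    (hcl : Fo S u v ∨ tie S u v) : LT' S u' v := by
  have hx' : cross S u' v := cross_of_sle_left h hx
  rcases hcl with hf | ⟨h1, h2, h3, h4⟩
  · exact Or.inr ⟨hx', Or.inl (Fo_mono_l h hf)⟩
  · by_cases heq : u' = u
    · subst heq; exact Or.inr ⟨hx', Or.inr ⟨h1, h2, h3, h4⟩⟩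
    have hslt : slt S u' u := slt_of_sle_ne h heq
    by_cases hF1 : Fo S u' v
    · exact Or.inr ⟨hx', Or.inl hF1⟩
    by_cases hF2 : Fo S v u'
    · exact absurd (Fo_mono_r h hF2) h2
    refine Or.inr ⟨hx', Or.inr ⟨hF1, hF2, ?_, ?_⟩⟩
    · rintro ⟨c, hcu', hcv⟩
      have hcltu : clt S c u := m17 hcu' hslt
      exact h2 (P_Fo (Or.inl ⟨c, ⟨(m13 hcv).1, m12 hcltu⟩, Or.inr hcltu⟩))
    · have e1 : tau S u' = tau S v := t_eq_of_unforced hF1 hF2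
      have e2 : tau S u = tau S v := t_eq_of_unforced h1 h2
      have e3 : tieSide S u' = tieSide S u := tieSide_of_sle h
      omega

lemma Mup {u v v' : S.U} (h : sle S v v') (hx : cross S u v)
    (hcl : Fo S u v ∨ tie S u v) : LT' S u v' := by
  have hx' : cross S u v' := cross_of_sle_right h hx
  rcases hcl with hf | ⟨h1, h2, h3, h4⟩
  · exact Or.inr ⟨hx', Or.inl (Fo_mono_r h hf)⟩
  · by_cases heq : v = v'
    · subst heq; exact Or.inr ⟨hx', Or.inr ⟨h1, h2, h3, h4⟩⟩
    have hslt : slt S v v' := slt_of_sle_ne h heq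
    by_cases hF1 : Fo S u v'
    · exact Or.inr ⟨hx', Or.inl hF1⟩
    by_cases hF2 : Fo S v' u
    · exact absurd (Fo_mono_l h hF2) h2
    refine Or.inr ⟨hx', Or.inr ⟨hF1, hF2, ?_, h4⟩⟩
    rintro ⟨c, hcu, hcv'⟩
    have hltc : ltc S v c := m18 hcv' hslt
    exact h2 (P_Fo (Or.inl ⟨c, ⟨m11 hltc, (m13 hcu).2⟩, Or.inl hltc⟩))

lemma eq_or_fix {u v : S.U} (hx : cross S u v) (h1 : ¬ LT' S u v) (h2 : ¬ LT' S v u) :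
    Ceq S u v ∨ (G S u = u ∧ G S v = v) := by
  have hF1 : ¬ Fo S u v := fun h => h1 (Or.inr ⟨hx, Or.inl h⟩)
  have hF2 : ¬ Fo S v u := fun h => h2 (Or.inr ⟨cross_symm hx, Or.inl h⟩)
  by_cases hc : Ceq S u v
  · exact Or.inl hc
  have ht1 : ¬ tie S u v := fun h => h1 (Or.inr ⟨hx, Or.inr h⟩)
  have ht2 : ¬ tie S v u := fun h => h2 (Or.inr ⟨cross_symm hx, Or.inr h⟩)
  have e1 : tau S u ≠ tieSide S u := fun h => ht1 ⟨hF1, hF2, hc, h⟩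
  have e2 : tau S v ≠ tieSide S v := fun h => ht2 ⟨hF2, hF1, fun hcc => hc (Ceq_symm hcc), h⟩
  have e3 : tau S u = tau S v := t_eq_of_unforced hF1 hF2
  have e4 := tieSide_cross hx
  have e5 := tau_le_two (S := S) u
  have hu1 : tau S u = 1 := by
    rcases tieSide_vals (S := S) u with hh | hh <;> rcases tieSide_vals (S := S) v with hh' | hh' <;> omega
  exact Or.inr ⟨tau_one.mp hu1, tau_one.mp (e3 ▸ hu1)⟩

lemma merge_unique {u v v' : S.U} (hx : cross S u v) (hx' : cross S u v')
    (h1 : ¬ LT' S u v) (h2 : ¬ LT' S v u) (h3 : ¬ LT' S u v') (h4 : ¬ LT' S v' u) :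
    v = v' := by
  rcases eq_or_fix hx h1 h2 with ⟨c, hcu, hcv⟩ | ⟨hfu, hfv⟩ <;>
    rcases eq_or_fix hx' h3 h4 with ⟨c', hcu', hcv'⟩ | ⟨hfu', hfv'⟩
  · have : c = c' := m19 hcu hcu'
    subst this
    exact ceq_cross_eq hcv hcv' hx hx'
  · -- Ceq u v, fixed (u, v')
    have hgc : c = S.C.g c := m19 hcu (hfu' ▸ ce_g hcu)
    have hGv : G S v = v := m21 hcv (hgc ▸ ce_g hcv)
    exact fix_unique_side hGv hfv' hx hx'
  · -- fixed (u,v), Ceq u v'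
    have hgc : c' = S.C.g c' := m19 hcu' (hfu ▸ ce_g hcu')
    have hGv' : G S v' = v' := m21 hcv' (hgc ▸ ce_g hcv')
    exact fix_unique_side hfv hGv' hx hx'
  · exact fix_unique_side hfv hfv' hx hx'

lemma trans_aux {z x : S.U} (h : LT' S z x) (y : S.U) : LT' S z y ∨ LT' S y x := by
  by_cases hzx : cross S z x
  · have hcl := clause_of h hzx
    rcases side_total z y with hzy | hzy | hzy
    · -- y is on the other side from z, i.e. same side as x
      rcases same_side_of_cross_cross hzx hzy with hxy | hyx
      · exact Or.inl (Mup hxy hzx hcl)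
      · by_cases heq : y = x
        · subst heq; exact Or.inl h
        · exact Or.inr (Or.inl (slt_of_sle_ne hyx heq))
    · -- sle z y (same side)
      by_cases heq : z = y
      · subst heq; exact Or.inr h
      · exact Or.inl (Or.inl (slt_of_sle_ne hzy heq))
    · -- sle y z
      exact Or.inr (Mdown hzy hzx hcl)
  · -- z and x on the same side
    have hslt : slt S z x := by
      rcases h with h | ⟨hc, _⟩
      · exact h
      · exact absurd hc hzx
    rcases side_total z y with hzy | hzy | hzy
    · -- y on the other side from z (and from x)
      have hxy : cross S x y := cross_of_sle_left' (sle_of_slt hslt) hzy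
      by_cases h1 : LT' S z y
      · exact Or.inl h1
      by_cases h2 : LT' S y x
      · exact Or.inr h2
      exfalso
      by_cases h3 : LT' S y z
      · exact h2 (Mup (sle_of_slt hslt) (cross_symm hzy) (clause_of h3 (cross_symm hzy)))
      · by_cases h4 : LT' S x y
        · exact h1 (Mdown (sle_of_slt hslt) hxy (clause_of h4 hxy))
        · have := merge_unique (cross_symm hzy) (cross_symm hxy) h3 h1 h2 h4
          exact slt_irrefl z (this ▸ hslt)
    · by_cases heq : z = y
      · subst heq; exact Or.inr (Or.inl hslt)
      · exact Or.inl (Or.inl (slt_of_sle_ne hzy heq))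
    · exact Or.inr (Or.inl (slt_of_sle_of_slt hzy hslt))

/-! ### the quotient order -/

variable (S) in
def le' (u v : S.U) : Prop := ¬ LT' S v u

lemma le'_refl (u : S.U) : le' S u u := LT'_irrefl u

lemma le'_total (u v : S.U) : le' S u v ∨ le' S v u := by
  by_contra hcon
  push_neg at hcon
  exact LT'_asymm (not_not.mp hcon.1) (not_not.mp hcon.2)

lemma le'_trans {u v w : S.U} (h1 : le' S u v) (h2 : le' S v w) : le' S u w :=
  fun h3 => (trans_aux h3 v).elim h2 h1

lemma le'_antitone {u v : S.U} (h : le' S u v) : le' S (G S v) (G S u) :=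
  fun h2 => h (LT'_antitone h2)

variable (S) in
def sd : Setoid S.U where
  r u v := le' S u v ∧ le' S v u
  iseqv := ⟨fun u => ⟨le'_refl u, le'_refl u⟩, fun h => ⟨h.2, h.1⟩,
    fun h1 h2 => ⟨le'_trans h1.1 h2.1, le'_trans h2.2 h1.2⟩⟩

variable (S) in
def Q := Quotient (sd S)

variable (S) in
def qle : Q S → Q S → Prop :=
  Quotient.lift₂ (le' S) (by
    intro a b a' b' ha hb
    apply propext
    exact ⟨fun h => le'_trans (le'_trans ha.2 h) hb.1,
           fun h => le'_trans (le'_trans ha.1 h) hb.2⟩)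

noncomputable instance QLinOrd : LinearOrder (Q S) where
  le := qle S
  le_refl a := Quotient.inductionOn a le'_refl
  le_trans a b c := Quotient.inductionOn₃ a b c (fun _ _ _ h1 h2 => le'_trans h1 h2)
  le_antisymm a b := Quotient.inductionOn₂ a b (fun _ _ h1 h2 => Quotient.sound ⟨h1, h2⟩)
  le_total a b := Quotient.inductionOn₂ a b le'_total
  toDecidableLE := fun _ _ => Classical.dec _

variable (S) in
def Qg : Q S → Q S :=
  Quotient.map (G S) (fun _ _ h => ⟨le'_antitone h.2, le'_antitone h.1⟩)

lemma Qg_anti : Antitone (Qg S) := by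
  intro a b
  refine Quotient.inductionOn₂ a b (fun u v h => ?_)
  exact le'_antitone h

variable (S) in
noncomputable def DStruct : LinOrderAnti where
  carrier := Q S
  g := Qg S
  anti := Qg_anti

lemma LT'_inl {a a' : S.A.carrier} :
    LT' S (Sum.inl a) (Sum.inl a') ↔ a < a' := by
  simp [LT', slt, cross]

lemma LT'_inr {b b' : S.B.carrier} :
    LT' S (Sum.inr b) (Sum.inr b') ↔ b < b' := by
  simp [LT', slt, cross]

variable (S) in
noncomputable def jAe : S.A.carrier ↪o (DStruct S).carrier :=
  OrderEmbedding.ofMapLEIff (fun a => Quotient.mk (sd S) (Sum.inl a)) (by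
    intro a a'
    show le' S (Sum.inl a) (Sum.inl a') ↔ a ≤ a'
    rw [le', LT'_inl, not_lt])

variable (S) in
noncomputable def jBe : S.B.carrier ↪o (DStruct S).carrier :=
  OrderEmbedding.ofMapLEIff (fun b => Quotient.mk (sd S) (Sum.inr b)) (by
    intro b b'
    show le' S (Sum.inr b) (Sum.inr b') ↔ b ≤ b'
    rw [le', LT'_inr, not_lt])

lemma jAe_g (a : S.A.carrier) : jAe S (S.A.g a) = (DStruct S).g (jAe S a) := rfl

lemma jBe_g (b : S.B.carrier) : jBe S (S.B.g b) = (DStruct S).g (jBe S b) := rfl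

/-! ### the images of C agree -/

lemma iterG_inl (c : S.C.carrier) : ∀ n,
    (G S)^[n] (Sum.inl (S.iA c) : S.U) = Sum.inl (S.iA ((S.C.g)^[n] c)) := by
  intro n
  induction n with
  | zero => rfl
  | succ k ih =>
    rw [Function.iterate_succ_apply', Function.iterate_succ_apply', ih]
    show Sum.inl (S.A.g (S.iA ((S.C.g)^[k] c))) = _
    rw [← S.hA]

lemma iterG_inr (c : S.C.carrier) : ∀ n,
    (G S)^[n] (Sum.inr (S.iB c) : S.U) = Sum.inr (S.iB ((S.C.g)^[n] c)) := by
  intro n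
  induction n with
  | zero => rfl
  | succ k ih =>
    rw [Function.iterate_succ_apply', Function.iterate_succ_apply', ih]
    show Sum.inr (S.B.g (S.iB ((S.C.g)^[k] c))) = _
    rw [← S.hB]

lemma tau_emb_eq (c : S.C.carrier) :
    tau S (Sum.inl (S.iA c) : S.U) = tau S (Sum.inr (S.iB c)) := by
  show tauX S.A (S.iA c) = tauX S.B (S.iB c)
  rcases lt_trichotomy c (S.C.g c) with h | h | h
  · rw [tauX_eq_zero_iff.mpr (by rw [← S.hA]; exact S.iA.lt_iff_lt.mpr h),
        tauX_eq_zero_iff.mpr (by rw [← S.hB]; exact S.iB.lt_iff_lt.mpr h)]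
  · rw [tauX_eq_one_iff.mpr (by rw [← S.hA, ← h]),
        tauX_eq_one_iff.mpr (by rw [← S.hB, ← h])]
  · rw [tauX_eq_two_iff.mpr (by rw [← S.hA]; exact S.iA.lt_iff_lt.mpr h),
        tauX_eq_two_iff.mpr (by rw [← S.hB]; exact S.iB.lt_iff_lt.mpr h)]

lemma C_not_P (c : S.C.carrier) :
    ¬ P S (Sum.inl (S.iA c)) (Sum.inr (S.iB c)) ∧
    ¬ P S (Sum.inr (S.iB c)) (Sum.inl (S.iA c)) := by
  have htau := tau_emb_eq (S := S) c
  constructor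
  · rintro (⟨c₀, ⟨hc1, hc2⟩, hs⟩ | ht)
    · have e1 : c ≤ c₀ := S.iA.le_iff_le.mp hc1
      have e2 : c₀ ≤ c := S.iB.le_iff_le.mp hc2
      rcases hs with hs | hs
      · have hs' : S.iA c < S.iA c₀ := hs
        exact absurd (S.iA.lt_iff_lt.mp hs') (not_lt.mpr e2)
      · have hs' : S.iB c₀ < S.iB c := hs
        exact absurd (S.iB.lt_iff_lt.mp hs') (not_lt.mpr e1)
    · omega
  · rintro (⟨c₀, ⟨hc1, hc2⟩, hs⟩ | ht)
    · have e1 : c ≤ c₀ := S.iB.le_iff_le.mp hc1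
      have e2 : c₀ ≤ c := S.iA.le_iff_le.mp hc2
      rcases hs with hs | hs
      · have hs' : S.iB c < S.iB c₀ := hs
        exact absurd (S.iB.lt_iff_lt.mp hs') (not_lt.mpr e2)
      · have hs' : S.iA c₀ < S.iA c := hs
        exact absurd (S.iA.lt_iff_lt.mp hs') (not_lt.mpr e1)
    · omega

lemma C_not_Fo (c : S.C.carrier) :
    ¬ Fo S (Sum.inl (S.iA c)) (Sum.inr (S.iB c)) ∧
    ¬ Fo S (Sum.inr (S.iB c)) (Sum.inl (S.iA c)) := by
  constructor
  · rintro ⟨n, hn⟩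
    rw [Pw, iterG_inl, iterG_inr] at hn
    rcases hn with ⟨_, hp⟩ | ⟨_, hp⟩
    · exact (C_not_P _).1 hp
    · exact (C_not_P _).2 hp
  · rintro ⟨n, hn⟩
    rw [Pw, iterG_inl, iterG_inr] at hn
    rcases hn with ⟨_, hp⟩ | ⟨_, hp⟩
    · exact (C_not_P _).2 hp
    · exact (C_not_P _).1 hp

lemma C_Ceq (c : S.C.carrier) :
    Ceq S (Sum.inl (S.iA c)) (Sum.inr (S.iB c)) :=
  ⟨c, rfl, rfl⟩

lemma C_not_LT (c : S.C.carrier) :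
    ¬ LT' S (Sum.inl (S.iA c)) (Sum.inr (S.iB c)) ∧
    ¬ LT' S (Sum.inr (S.iB c)) (Sum.inl (S.iA c)) := by
  constructor
  · rintro (h | ⟨_, hf | ht⟩)
    · exact slt_not_cross h (by simp [cross])
    · exact (C_not_Fo c).1 hf
    · exact ht.2.2.1 (C_Ceq c)
  · rintro (h | ⟨_, hf | ht⟩)
    · exact slt_not_cross h (by simp [cross])
    · exact (C_not_Fo c).2 hf
    · exact ht.2.2.1 (Ceq_symm (C_Ceq c))

lemma jAB_agree (c : S.C.carrier) : jAe S (S.iA c) = jBe S (S.iB c) := by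
  apply Quotient.sound
  exact ⟨(C_not_LT c).2, (C_not_LT c).1⟩

end Setup
end LinAmalg

/-- The class of linearly ordered sets with one order reversing unary operation
has the amalgamation property. -/
theorem linear_orders_one_antitone_op_amalgamation
    (A B C : LinOrderAnti)
    (iA : C.carrier ↪o A.carrier) (iB : C.carrier ↪o B.carrier)
    (hA : ∀ c, iA (C.g c) = A.g (iA c))
    (hB : ∀ c, iB (C.g c) = B.g (iB c)) :
    ∃ (D : LinOrderAnti) (jA : A.carrier ↪o D.carrier)
      (jB : B.carrier ↪o D.carrier),
      (∀ a, jA (A.g a) = D.g (jA a)) ∧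
      (∀ b, jB (B.g b) = D.g (jB b)) ∧
      (∀ c, jA (iA c) = jB (iB c)) := by
  let S : LinAmalg.Setup := ⟨A, B, C, iA, iB, hA, hB⟩
  exact ⟨LinAmalg.Setup.DStruct S, LinAmalg.Setup.jAe S, LinAmalg.Setup.jBe S,
    fun a => LinAmalg.Setup.jAe_g (S := S) a,
    fun b => LinAmalg.Setup.jBe_g (S := S) b,
    fun c => LinAmalg.Setup.jAB_agree (S := S) c⟩
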